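/- Let h : (0,∞) → ℝ be locally Lipschitz and let v : [0,L] → (0,∞) be a C² solution of v'' = h(v) with v(0) = v(L) = 1 and v not identically 1. Then v has exactly one interior critical point, located at L/2, which is a global minimum; v is decreasing on (0,L/2), increasing on (L/2,L), and v(x) = v(L-x) for all x, provided the constant function 1 also solves the equation (i.e. h(1) = 0). -/

import Mathlib

open Set Filter

/-- Symmetry of the phase-field profile: a non-constant C² solution of `v'' = h(v)` on
`[0,L]` with values in `(0,1]`, `v(0) = v(L) = 1`, `h` locally Lipschitz on `(0,∞)` and
`h(1) = 0`, is a symmetric well: its unique interior critical point is `L/2`, a global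
minimum, `v` is strictly decreasing on `[0,L/2]`, strictly increasing on `[L/2,L]`, and
`v(x) = v(L-x)`. -/

private lemma eq_on_closure_pt {F G : ℝ → ℝ} {s : Set ℝ} {t : ℝ} (ht : t ∈ closure s)
    (hF : ContinuousWithinAt F s t) (hG : ContinuousWithinAt G s t)
    (heq : EqOn F G s) : F t = G t := by
  haveI : (nhdsWithin t s).NeBot := mem_closure_iff_nhdsWithin_neBot.1 ht
  have hev : G =ᶠ[nhdsWithin t s] F :=
    Filter.eventuallyEq_of_mem self_mem_nhdsWithin fun x hx => (heq hx).symm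
  exact tendsto_nhds_unique hF (hG.congr' hev)

private lemma ode_unique (h : ℝ → ℝ)
    (hlip : ∀ s : ℝ, 0 < s → ∃ (K : NNReal) (U : Set ℝ), U ∈ nhds s ∧ LipschitzOnWith K h U)
    (f g : ℝ → ℝ × ℝ) (α β c : ℝ) (hc : c ∈ Ioo α β)
    (hf : ∀ x ∈ Ioo α β, HasDerivAt f ((f x).2, h (f x).1) x)
    (hg : ∀ x ∈ Ioo α β, HasDerivAt g ((g x).2, h (g x).1) x)
    (hfpos : ∀ x ∈ Ioo α β, 0 < (f x).1)
    (heq : f c = g c) : EqOn f g (Ioo α β) := by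
  haveI : PreconnectedSpace (Ioo α β) := Subtype.preconnectedSpace isPreconnected_Ioo
  set S : Set (Ioo α β) := {x | f ↑x = g ↑x} with hS
  have hclosed : IsClosed S := by
    apply isClosed_eq
    · exact continuous_iff_continuousAt.2 fun x =>
        ((hf _ x.2).continuousAt).comp continuous_subtype_val.continuousAt
    · exact continuous_iff_continuousAt.2 fun x =>
        ((hg _ x.2).continuousAt).comp continuous_subtype_val.continuousAt
  have hopen : IsOpen S := by
    rw [isOpen_iff_mem_nhds]
    rintro x (hx : f ↑x = g ↑x)
    obtain ⟨K, U, hU, hKU⟩ := hlip (f ↑x).1 (hfpos _ x.2)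
    have hLip : ∀ t : ℝ, LipschitzOnWith (max 1 K)
        (fun p : ℝ × ℝ => ((p.2, h p.1) : ℝ × ℝ)) (U ×ˢ (univ : Set ℝ)) := by
      intro t p hp q hq
      rw [Prod.edist_eq]
      apply max_le
      · calc edist p.2 q.2 ≤ edist p q := by rw [Prod.edist_eq]; exact le_max_right _ _
          _ = 1 * edist p q := (one_mul _).symm
          _ ≤ (max 1 K : NNReal) * edist p q := by
              gcongr
              exact_mod_cast le_max_left 1 K
      · calc edist (h p.1) (h q.1) ≤ K * edist p.1 q.1 := hKU hp.1 hq.1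
          _ ≤ (max 1 K : NNReal) * edist p q := by
              gcongr
              · exact_mod_cast le_max_right 1 K
              · rw [Prod.edist_eq]; exact le_max_left _ _
    have hIoo : ∀ᶠ t in nhds (↑x : ℝ), t ∈ Ioo α β := isOpen_Ioo.eventually_mem x.2
    have hfU : ∀ᶠ t in nhds (↑x : ℝ), (f t).1 ∈ U := by
      have : ContinuousAt (fun t => (f t).1) ↑x := (hf _ x.2).continuousAt.fst
      exact this.preimage_mem_nhds hU
    have hgU : ∀ᶠ t in nhds (↑x : ℝ), (g t).1 ∈ U := by
      have : ContinuousAt (fun t => (g t).1) ↑x := (hg _ x.2).continuousAt.fst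
      apply this.preimage_mem_nhds
      rw [← hx]; exact hU
    have hev : f =ᶠ[nhds (↑x : ℝ)] g := by
      refine ODE_solution_unique_of_eventually (v := fun _ p => ((p.2, h p.1) : ℝ × ℝ))
        (s := fun _ => U ×ˢ (univ : Set ℝ)) (Filter.Eventually.of_forall hLip) ?_ ?_ hx
      · filter_upwards [hIoo, hfU] with t ht htU
        exact ⟨hf t ht, ⟨htU, trivial⟩⟩
      · filter_upwards [hIoo, hgU] with t ht htU
        exact ⟨hg t ht, ⟨htU, trivial⟩⟩
    obtain ⟨W, hW, hWeq⟩ := Filter.eventuallyEq_iff_exists_mem.1 hev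
    refine Filter.mem_of_superset
      (continuous_subtype_val.continuousAt.preimage_mem_nhds hW) ?_
    intro y hy
    exact hWeq hy
  have huniv : S = univ := (IsClopen.eq_univ ⟨hclosed, hopen⟩) ⟨⟨c, hc⟩, heq⟩
  intro x hx
  have : (⟨x, hx⟩ : Ioo α β) ∈ S := huniv ▸ mem_univ _
  exact this

theorem stmt11 (L : ℝ) (hL : 0 < L) (h : ℝ → ℝ)
    (hlip : ∀ s : ℝ, 0 < s → ∃ (K : NNReal) (U : Set ℝ), U ∈ nhds s ∧ LipschitzOnWith K h U)
    (hh1 : h 1 = 0)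
    (v v' : ℝ → ℝ)
    (hv : ∀ x ∈ Icc (0:ℝ) L, HasDerivWithinAt v (v' x) (Icc 0 L) x)
    (hv' : ∀ x ∈ Icc (0:ℝ) L, HasDerivWithinAt v' (h (v x)) (Icc 0 L) x)
    (hrange : ∀ x ∈ Icc (0:ℝ) L, v x ∈ Ioc (0:ℝ) 1)
    (hv0 : v 0 = 1) (hvL : v L = 1)
    (hnot : ¬ ∀ x ∈ Icc (0:ℝ) L, v x = 1) :
    (∀ x ∈ Ioo (0:ℝ) L, v' x = 0 → x = L / 2) ∧
    v' (L / 2) = 0 ∧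
    (∀ x ∈ Icc (0:ℝ) L, v (L / 2) ≤ v x) ∧
    StrictAntiOn v (Icc 0 (L / 2)) ∧
    StrictMonoOn v (Icc (L / 2) L) ∧
    (∀ x ∈ Icc (0:ℝ) L, v x = v (L - x)) := by

  have hLhalf : 0 < L / 2 := by linarith
  have hvcont : ContinuousOn v (Icc 0 L) := fun x hx => (hv x hx).continuousWithinAt
  have hv'cont : ContinuousOn v' (Icc 0 L) := fun x hx => (hv' x hx).continuousWithinAt
  have hmem : ∀ x ∈ Ioo (0:ℝ) L, Icc (0:ℝ) L ∈ nhds x := fun x hx => Icc_mem_nhds hx.1 hx.2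
  have hvD : ∀ x ∈ Ioo (0:ℝ) L, HasDerivAt v (v' x) x :=
    fun x hx => (hv x (Ioo_subset_Icc_self hx)).hasDerivAt (hmem x hx)
  have hv'D : ∀ x ∈ Ioo (0:ℝ) L, HasDerivAt v' (h (v x)) x :=
    fun x hx => (hv' x (Ioo_subset_Icc_self hx)).hasDerivAt (hmem x hx)
  set f : ℝ → ℝ × ℝ := fun x => (v x, v' x) with hfdef
  have hfD : ∀ x ∈ Ioo (0:ℝ) L, HasDerivAt f ((f x).2, h (f x).1) x :=
    fun x hx => (hvD x hx).prodMk (hv'D x hx)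
  -- Claim A : no interior point with v = 1
  have claimA : ∀ c ∈ Ioo (0:ℝ) L, v c < 1 := by
    intro c hc
    rcases lt_or_eq_of_le (hrange c (Ioo_subset_Icc_self hc)).2 with hlt | heq1
    · exact hlt
    exfalso
    have hmax : IsLocalMax v c := by
      filter_upwards [hmem c hc] with y hy
      rw [heq1]
      exact (hrange y hy).2
    have hc0 : v' c = 0 := hmax.hasDerivAt_eq_zero (hvD c hc)
    have hconst : EqOn f (fun _ => (((1:ℝ), (0:ℝ)) : ℝ × ℝ)) (Ioo 0 L) := by
      apply ode_unique h hlip f _ 0 L c hc hfD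
      · intro x _
        simpa [hh1, Prod.mk_zero_zero] using hasDerivAt_const x (((1:ℝ), (0:ℝ)) : ℝ × ℝ)
      · intro x hx; exact (hrange x (Ioo_subset_Icc_self hx)).1
      · simp only [hfdef, Prod.mk.injEq]
        exact ⟨heq1, hc0⟩
    apply hnot
    intro x hx
    rcases eq_or_lt_of_le hx.1 with h0 | h0
    · rw [← h0]; exact hv0
    rcases eq_or_lt_of_le hx.2 with hL' | hL'
    · rw [hL']; exact hvL
    · exact congrArg Prod.fst (hconst ⟨h0, hL'⟩)
  -- reflection about a critical point
  have reflEq : ∀ c ∈ Ioo (0:ℝ) L, v' c = 0 →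
      ∀ x ∈ Ioo (max 0 (2*c - L)) (min (2*c) L), v x = v (2*c - x) := by
    intro c hc hc0
    have hsub : ∀ x ∈ Ioo (max 0 (2*c - L)) (min (2*c) L), 2*c - x ∈ Ioo (0:ℝ) L := by
      intro x hx
      have h1 : x < 2*c := lt_of_lt_of_le hx.2 (min_le_left _ _)
      have h2 : 2*c - L < x := lt_of_le_of_lt (le_max_right _ _) hx.1
      exact ⟨by linarith, by linarith⟩
    have hsubL : Ioo (max 0 (2*c - L)) (min (2*c) L) ⊆ Ioo (0:ℝ) L := by
      intro x hx
      exact ⟨lt_of_le_of_lt (le_max_left _ _) hx.1, lt_of_lt_of_le hx.2 (min_le_right _ _)⟩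
    set g : ℝ → ℝ × ℝ := fun x => (v (2*c - x), -(v' (2*c - x))) with hgdef
    have hgD : ∀ x ∈ Ioo (max 0 (2*c - L)) (min (2*c) L), HasDerivAt g ((g x).2, h (g x).1) x := by
      intro x hx
      have hinner : HasDerivAt (fun y : ℝ => 2*c - y) (-1) x := by
        simpa using (hasDerivAt_id x).const_sub (2*c)
      have h1 : HasDerivAt (fun y => v (2*c - y)) (-(v' (2*c - x))) x := by
        have := (hvD _ (hsub x hx)).comp x hinner
        simpa [Function.comp_def] using this
      have h2 : HasDerivAt (fun y => -(v' (2*c - y))) (h (v (2*c - x))) x := by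
        have := ((hv'D _ (hsub x hx)).comp x hinner).neg
        simpa [Function.comp_def, Pi.neg_def] using this
      exact h1.prodMk h2
    have hcmem : c ∈ Ioo (max 0 (2*c - L)) (min (2*c) L) :=
      ⟨max_lt hc.1 (by linarith [hc.2]), lt_min (by linarith [hc.1]) hc.2⟩
    have heqc : f c = g c := by
      have h2c : 2*c - c = c := by ring
      show (v c, v' c) = (v (2*c - c), -(v' (2*c - c)))
      rw [h2c, hc0, neg_zero]
    have hEq := ode_unique h hlip f g (max 0 (2*c - L)) (min (2*c) L) c hcmem
      (fun x hx => hfD x (hsubL hx)) hgD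
      (fun x hx => (hrange x (Ioo_subset_Icc_self (hsubL hx))).1) heqc
    intro x hx
    exact congrArg Prod.fst (hEq hx)
  -- Claim B : the only interior critical point is L/2
  have claimB : ∀ c ∈ Ioo (0:ℝ) L, v' c = 0 → c = L / 2 := by
    intro c hc hc0
    by_contra hne
    rcases lt_or_gt_of_ne hne with hlt | hgt
    · -- c < L/2, so 2c < L; show v (2c) = v 0 = 1, contradiction
      have h2c : 2*c < L := by linarith
      have hα : max 0 (2*c - L) = 0 := max_eq_left (by linarith)
      have hβ : min (2*c) L = 2*c := min_eq_left (by linarith)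
      have hEq : EqOn v (fun x => v (2*c - x)) (Ioo 0 (2*c)) := by
        intro x hx
        have := reflEq c hc hc0 x (by rw [hα, hβ]; exact hx)
        exact this
      have hcl : (2*c : ℝ) ∈ closure (Ioo (0:ℝ) (2*c)) := by
        rw [closure_Ioo (by linarith [hc.1] : (0:ℝ) ≠ 2*c)]
        exact right_mem_Icc.2 (by linarith [hc.1])
      have hIooSub : Ioo (0:ℝ) (2*c) ⊆ Icc (0:ℝ) L :=
        fun y hy => ⟨hy.1.le, by linarith [hy.2]⟩
      have hF : ContinuousWithinAt v (Ioo 0 (2*c)) (2*c) :=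
        (hvcont (2*c) ⟨by linarith [hc.1], h2c.le⟩).mono hIooSub
      have hG : ContinuousWithinAt (fun x => v (2*c - x)) (Ioo 0 (2*c)) (2*c) := by
        have hinner : ContinuousWithinAt (fun x : ℝ => 2*c - x) (Ioo 0 (2*c)) (2*c) :=
          (continuous_const.sub continuous_id).continuousWithinAt
        have houter : ContinuousWithinAt v (Icc 0 L) (2*c - 2*c) := by
          rw [sub_self]; exact hvcont 0 (left_mem_Icc.2 hL.le)
        exact houter.comp hinner (fun y hy => ⟨by linarith [hy.2], by linarith [hy.1]⟩)
      have hend : v (2*c) = v (2*c - 2*c) := eq_on_closure_pt hcl hF hG hEq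
      rw [sub_self, hv0] at hend
      exact absurd hend (ne_of_lt (claimA (2*c) ⟨by linarith [hc.1], h2c⟩))
    · -- c > L/2, so 2c > L; show v (2c - L) = v L = 1, contradiction
      have h2c : L < 2*c := by linarith
      have hα : max 0 (2*c - L) = 2*c - L := max_eq_right (by linarith)
      have hβ : min (2*c) L = L := min_eq_right (by linarith)
      have hEq : EqOn v (fun x => v (2*c - x)) (Ioo (2*c - L) L) := by
        intro x hx
        have := reflEq c hc hc0 x (by rw [hα, hβ]; exact hx)
        exact this
      have hcl : (2*c - L : ℝ) ∈ closure (Ioo (2*c - L) L) := by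
        rw [closure_Ioo (by linarith [hc.2] : (2*c - L : ℝ) ≠ L)]
        exact left_mem_Icc.2 (by linarith [hc.2])
      have hIooSub : Ioo (2*c - L) L ⊆ Icc (0:ℝ) L :=
        fun y hy => ⟨by linarith [hy.1], hy.2.le⟩
      have hF : ContinuousWithinAt v (Ioo (2*c - L) L) (2*c - L) :=
        (hvcont (2*c - L) ⟨by linarith, by linarith [hc.2]⟩).mono hIooSub
      have hG : ContinuousWithinAt (fun x => v (2*c - x)) (Ioo (2*c - L) L) (2*c - L) := by
        have hinner : ContinuousWithinAt (fun x : ℝ => 2*c - x) (Ioo (2*c - L) L) (2*c - L) :=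
          (continuous_const.sub continuous_id).continuousWithinAt
        have houter : ContinuousWithinAt v (Icc 0 L) (2*c - (2*c - L)) := by
          have : 2*c - (2*c - L) = L := by ring
          rw [this]; exact hvcont L (right_mem_Icc.2 hL.le)
        exact houter.comp hinner (fun y hy => ⟨by linarith [hy.2], by linarith [hy.1]⟩)
      have hend : v (2*c - L) = v (2*c - (2*c - L)) := eq_on_closure_pt hcl hF hG hEq
      have hLL : 2*c - (2*c - L) = L := by ring
      rw [hLL, hvL] at hend
      exact absurd hend (ne_of_lt (claimA (2*c - L) ⟨by linarith, by linarith [hc.2]⟩))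
  -- minimum point
  obtain ⟨x₀, hx₀I, hx₀⟩ : ∃ x ∈ Icc (0:ℝ) L, v x < 1 := by
    push_neg at hnot
    obtain ⟨x, hxI, hxne⟩ := hnot
    exact ⟨x, hxI, lt_of_le_of_ne (hrange x hxI).2 hxne⟩
  obtain ⟨m, hmI, hmin⟩ := isCompact_Icc.exists_isMinOn (nonempty_Icc.2 hL.le) hvcont
  have hm1 : v m < 1 := lt_of_le_of_lt (hmin hx₀I) hx₀
  have hmIoo : m ∈ Ioo (0:ℝ) L := by
    constructor
    · rcases eq_or_lt_of_le hmI.1 with h0 | h0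
      · exfalso; rw [← h0, hv0] at hm1; exact lt_irrefl 1 hm1
      · exact h0
    · rcases eq_or_lt_of_le hmI.2 with hL' | hL'
      · exfalso; rw [hL', hvL] at hm1; exact lt_irrefl 1 hm1
      · exact hL'
  have hm0 : v' m = 0 :=
    (hmin.isLocalMin (hmem m hmIoo)).hasDerivAt_eq_zero (hvD m hmIoo)
  have hmhalf : m = L / 2 := claimB m hmIoo hm0
  have hhalfIoo : L / 2 ∈ Ioo (0:ℝ) L := ⟨hLhalf, by linarith⟩
  have hv'half : v' (L / 2) = 0 := hmhalf ▸ hm0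
  have hminhalf : ∀ x ∈ Icc (0:ℝ) L, v (L / 2) ≤ v x := fun x hx => hmhalf ▸ hmin hx
  -- symmetry
  have hsym : ∀ x ∈ Icc (0:ℝ) L, v x = v (L - x) := by
    intro x hx
    rcases eq_or_lt_of_le hx.1 with h0 | h0
    · rw [← h0, sub_zero, hv0, hvL]
    rcases eq_or_lt_of_le hx.2 with hL' | hL'
    · rw [hL', sub_self, hv0, hvL]
    · have hE := reflEq (L/2) hhalfIoo hv'half x
        ⟨max_lt h0 (by linarith), lt_min (by linarith) hL'⟩
      have : 2*(L/2) - x = L - x := by ring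
      rw [this] at hE
      exact hE
  -- sign of v' on (0, L/2)
  have hIccSub : Icc (0:ℝ) (L/2) ⊆ Icc (0:ℝ) L := Icc_subset_Icc_right (by linarith)
  have hIooSub2 : Ioo (0:ℝ) (L/2) ⊆ Ioo (0:ℝ) L := Ioo_subset_Ioo_right (by linarith)
  have hne' : ∀ x ∈ Ioo (0:ℝ) (L/2), v' x ≠ 0 := by
    intro x hx hx0
    have := claimB x (hIooSub2 hx) hx0
    linarith [hx.2]
  have hneg : ∀ x ∈ Ioo (0:ℝ) (L/2), v' x < 0 := by
    by_contra hcon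
    push_neg at hcon
    obtain ⟨x₁, hx₁, hx₁'⟩ := hcon
    have hx₁pos : 0 < v' x₁ := lt_of_le_of_ne hx₁' (Ne.symm (hne' x₁ hx₁))
    have hallpos : ∀ x ∈ Ioo (0:ℝ) (L/2), 0 < v' x := by
      intro x hx
      by_contra hxn
      push_neg at hxn
      have hxneg : v' x < 0 := lt_of_le_of_ne hxn (hne' x hx)
      have hsubI : uIcc x₁ x ⊆ Ioo (0:ℝ) (L/2) := ordConnected_Ioo.uIcc_subset hx₁ hx
      have hcont' : ContinuousOn v' (uIcc x₁ x) :=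
        hv'cont.mono (hsubI.trans (hIooSub2.trans Ioo_subset_Icc_self))
      have h0m : (0:ℝ) ∈ uIcc (v' x₁) (v' x) := mem_uIcc.2 (Or.inr ⟨hxneg.le, hx₁pos.le⟩)
      obtain ⟨z, hz, hz0⟩ := intermediate_value_uIcc hcont' h0m
      exact hne' z (hsubI hz) hz0
    have hm : StrictMonoOn v (Icc 0 (L/2)) := by
      apply strictMonoOn_of_deriv_pos (convex_Icc _ _) (hvcont.mono hIccSub)
      intro x hx
      rw [interior_Icc] at hx
      rw [(hvD x (hIooSub2 hx)).deriv]
      exact hallpos x hx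
    have := hm (left_mem_Icc.2 hLhalf.le) (right_mem_Icc.2 hLhalf.le) hLhalf
    rw [hv0] at this
    exact absurd this (not_lt.2 (hrange (L/2) (hIccSub (right_mem_Icc.2 hLhalf.le))).2)
  have hanti : StrictAntiOn v (Icc 0 (L/2)) := by
    apply strictAntiOn_of_deriv_neg (convex_Icc _ _) (hvcont.mono hIccSub)
    intro x hx
    rw [interior_Icc] at hx
    rw [(hvD x (hIooSub2 hx)).deriv]
    exact hneg x hx
  have hmono : StrictMonoOn v (Icc (L/2) L) := by
    intro x hx y hy hxy
    have hx' : L - x ∈ Icc (0:ℝ) (L/2) := ⟨by linarith [hx.2], by linarith [hx.1]⟩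
    have hy' : L - y ∈ Icc (0:ℝ) (L/2) := ⟨by linarith [hy.2], by linarith [hy.1]⟩
    have hxI : x ∈ Icc (0:ℝ) L := ⟨le_trans hLhalf.le hx.1, hx.2⟩
    have hyI : y ∈ Icc (0:ℝ) L := ⟨le_trans hLhalf.le hy.1, hy.2⟩
    calc v x = v (L - x) := hsym x hxI
      _ < v (L - y) := hanti hy' hx' (by linarith)
      _ = v y := (hsym y hyI).symm
  exact ⟨claimB, hv'half, hminhalf, hanti, hmono, hsym⟩
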